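/- Let P be an LPOD and let M be a three-valued answer set of P. Then M, viewed as a four-valued interpretation, is a ⪯-minimal four-valued model of P and M is solid. -/

import Mathlib

/-! Four truth values F < F* < T* < T. -/
inductive V4 : Type
  | F | Fs | Ts | T
  deriving DecidableEq, Repr

instance : Fintype V4 := ⟨{V4.F, V4.Fs, V4.Ts, V4.T}, fun x => by cases x <;> decide⟩

namespace V4

def toNat : V4 → ℕ
  | F => 0
  | Fs => 1
  | Ts => 2
  | T => 3

theorem toNat_injective : Function.Injective toNat := by
  intro a b h
  cases a <;> cases b <;> simp_all [toNat]

instance : LinearOrder V4 := LinearOrder.lift' toNat toNat_injective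

instance : BoundedOrder V4 where
  top := T
  le_top a := by cases a <;> decide
  bot := F
  bot_le a := by cases a <;> decide

/-- Negation-as-failure: `not φ` is `T` if `φ ≤ F*`, else `F`. -/
def notv (a : V4) : V4 := if a ≤ Fs then T else F

/-- Ordered disjunction on truth values: `u × v = v` if `u = F*`, else `u`. -/
def times (a b : V4) : V4 := if a = Fs then b else a

end V4

variable {α : Type}

/-- A ground literal: an atom together with a polarity (`true` = the atom itself,
`false` = its strong negation). -/
structure Lit (α : Type) where
  atom : α
  positive : Bool
  deriving DecidableEq

/-- A (four-valued) interpretation assigns a truth value to every literal.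
Three-valued interpretations are the `solid` ones (no `T*` value). -/
abbrev Interp (α : Type) := Lit α → V4

/-- `I` is solid (equivalently, three-valued) if it assigns `T*` to no literal. -/
def solid (I : Interp α) : Prop := ∀ l, I l ≠ V4.Ts

/-- `I` is consistent: no atom has both the atom and its strong negation `T`. -/
def consistentI (I : Interp α) : Prop :=
  ∀ a : α, ¬ (I ⟨a, true⟩ = V4.T ∧ I ⟨a, false⟩ = V4.T)

/-- `I` takes values only in `{F, T}`. -/
def twoValued (I : Interp α) : Prop := ∀ l, I l = V4.F ∨ I l = V4.T

/-- Value of the conjunction of a list of literals. -/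
def evalConj (I : Interp α) (L : List (Lit α)) : V4 := (L.map I).foldr min V4.T

/-- Value of the conjunction `not B1 ∧ ⋯ ∧ not Bk`. -/
def evalNegs (I : Interp α) (L : List (Lit α)) : V4 :=
  (L.map (fun b => V4.notv (I b))).foldr min V4.T

/-- Value of the disjunction of a list of literals. -/
def evalDisj (I : Interp α) (L : List (Lit α)) : V4 := (L.map I).foldr max V4.F

/-- Value of an ordered disjunction of the given (nonempty) list of values.
(`F*` is a right identity for `×`, so the fold computes `v1 × ⋯ × vn`.) -/
def evalOD (vs : List V4) : V4 := vs.foldr V4.times V4.Fs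

/-- Pointwise `≤` on interpretations. -/
def interpLE (I J : Interp α) : Prop := ∀ l, I l ≤ J l

/-- The four-valued relation `⪯`: `u ⪯ v` iff `u = v` or `u ≺ v`, where
`F ≺ F*`, `F ≺ T*`, `F ≺ T` and `T* ≺ T`.  On three-valued (solid)
interpretations it restricts to the ordering generated by `F ≺ F*`, `F ≺ T`. -/
def preceq (u v : V4) : Prop :=
  u = v ∨ (u = V4.F ∧ v ≠ V4.F) ∨ (u = V4.Ts ∧ v = V4.T)

/-- Pointwise `⪯` on interpretations. -/
def interpPreceq (I J : Interp α) : Prop := ∀ l, preceq (I l) (J l)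

/-- The set of literals that are `T` in `I`. -/
def collapse (I : Interp α) : Set (Lit α) := { l | I l = V4.T }

/-! ### LPOD rules -/

/-- An LPOD rule `C1 × ⋯ × Cn ← A1,…,Am, not B1,…,not Bk` with head
`c1 :: cs` (so the head is nonempty). -/
structure Rule (α : Type) where
  c1 : Lit α
  cs : List (Lit α)
  pos : List (Lit α)
  neg : List (Lit α)

def Rule.headList (R : Rule α) : List (Lit α) := R.c1 :: R.cs

def Rule.headVal (R : Rule α) (I : Interp α) : V4 := evalOD (R.headList.map I)

def Rule.bodyVal (R : Rule α) (I : Interp α) : V4 :=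
  min (evalConj I R.pos) (evalNegs I R.neg)

/-- `I` satisfies the rule `R` (the rule evaluates to `T`). -/
def ruleSat (I : Interp α) (R : Rule α) : Prop := R.bodyVal I ≤ R.headVal I

/-- `I` is a model of the LPOD `P`. -/
def isModel (I : Interp α) (P : Set (Rule α)) : Prop := ∀ R ∈ P, ruleSat I R

/-! ### The ×-reduct of an LPOD -/

/-- A reduct rule `C ← [F*,] A1,…,Am`; `fstar` records whether the constant `F*`
occurs in the body. -/
structure RedRule (α : Type) where
  head : Lit α
  pos : List (Lit α)
  fstar : Bool

def RedRule.bodyVal (r : RedRule α) (I : Interp α) : V4 :=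
  min (if r.fstar then V4.Fs else V4.T) (evalConj I r.pos)

def redSat (I : Interp α) (r : RedRule α) : Prop := r.bodyVal I ≤ I r.head

def redModel (I : Interp α) (Q : Set (RedRule α)) : Prop := ∀ r ∈ Q, redSat I r

/-- Reduct rules generated by a head `C1,…,Cn`: rules `Cj ← F*, body` for
`j < r` and `Cr ← body`, where `r` is the least index with
`I C1 = ⋯ = I C_{r-1} = F*` and (`r = n` or `I Cr ≠ F*`). -/
def xredHead (I : Interp α) (body : List (Lit α)) : List (Lit α) → List (RedRule α)
  | [] => []
  | [c] => [⟨c, body, false⟩]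
  | c :: c' :: rest =>
    if I c = V4.Fs then ⟨c, body, true⟩ :: xredHead I body (c' :: rest)
    else [⟨c, body, false⟩]

/-- The ×-reduct of a rule w.r.t. `I`. -/
def xredRule (I : Interp α) (R : Rule α) : List (RedRule α) :=
  if ∃ b ∈ R.neg, I b = V4.T then [] else xredHead I R.pos R.headList

/-- The ×-reduct of an LPOD w.r.t. `I`. -/
def xreduct (I : Interp α) (P : Set (Rule α)) : Set (RedRule α) :=
  { r | ∃ R ∈ P, r ∈ xredRule I R }

/-- `M` is a three-valued answer set of the LPOD `P`: a consistent three-valued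
interpretation that is the `≤`-least (three-valued) model of `P^M_×`. -/
def threeAnswerSet (P : Set (Rule α)) (M : Interp α) : Prop :=
  solid M ∧ consistentI M ∧ redModel M (xreduct M P) ∧
  ∀ N : Interp α, solid N → redModel N (xreduct M P) → interpLE M N

/-! ### Two-valued notions: Brewka answer sets and GL answer sets -/

/-- A set of literals is consistent if it contains no complementary pair. -/
def twoConsistent (N : Set (Lit α)) : Prop :=
  ∀ a : α, ¬ (Lit.mk a true ∈ N ∧ Lit.mk a false ∈ N)

/-- `N` is a (two-valued) Brewka-model of the LPOD `P`. -/
def brewkaModel (N : Set (Lit α)) (P : Set (Rule α)) : Prop :=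
  ∀ R ∈ P, (∀ a ∈ R.pos, a ∈ N) → (∀ b ∈ R.neg, b ∉ N) → ∃ c ∈ R.headList, c ∈ N

/-- A positive rule `C ← A1,…,Am`. -/
structure PosRule (α : Type) where
  head : Lit α
  pos : List (Lit α)

/-- `N` is a two-valued model of a positive program. -/
def posModel (N : Set (Lit α)) (Q : Set (PosRule α)) : Prop :=
  ∀ r ∈ Q, (∀ a ∈ r.pos, a ∈ N) → r.head ∈ N

/-- The Brewka ×-reduct of an LPOD w.r.t. a set of literals `N`:
`Ci ← A1,…,Am` whenever `Ci ∈ N` and `N ∩ {C1,…,C_{i-1},B1,…,Bk} = ∅`. -/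
def brewkaReduct (N : Set (Lit α)) (P : Set (Rule α)) : Set (PosRule α) :=
  { r | ∃ R ∈ P, ∃ l1 l2 : List (Lit α),
      R.headList = l1 ++ r.head :: l2 ∧ r.pos = R.pos ∧ r.head ∈ N ∧
      (∀ c ∈ l1, c ∉ N) ∧ (∀ b ∈ R.neg, b ∉ N) }

/-- `N` is a Brewka answer set of the LPOD `P`. -/
def brewkaAnswerSet (P : Set (Rule α)) (N : Set (Lit α)) : Prop :=
  twoConsistent N ∧ brewkaModel N P ∧ posModel N (brewkaReduct N P) ∧
  ∀ N', posModel N' (brewkaReduct N P) → N ⊆ N'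

/-- The Gelfond–Lifschitz reduct of an extended logic program (an LPOD all
of whose rule heads are single literals) w.r.t. a set of literals `N`. -/
def glReduct (P : Set (Rule α)) (N : Set (Lit α)) : Set (PosRule α) :=
  { r | ∃ R ∈ P, (∀ b ∈ R.neg, b ∉ N) ∧ r.head = R.c1 ∧ r.pos = R.pos }

/-- `N` is a standard answer set of the extended logic program `P`: a consistent
set of literals that is the least model of `P^N`. -/
def stdAnswerSet (P : Set (Rule α)) (N : Set (Lit α)) : Prop :=
  twoConsistent N ∧ posModel N (glReduct P N) ∧
  ∀ N', posModel N' (glReduct P N) → N ⊆ N'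

/-! ### DLPODs -/

/-- A DLPOD rule `𝒞1 × ⋯ × 𝒞n ← A1,…,Am, not B1,…,not Bk`, where each `𝒞i`
is a disjunction of literals; the head is `c1 :: cs` (nonempty). -/
structure DRule (α : Type) where
  c1 : List (Lit α)
  cs : List (List (Lit α))
  pos : List (Lit α)
  neg : List (Lit α)

def DRule.headList (R : DRule α) : List (List (Lit α)) := R.c1 :: R.cs

def DRule.headVal (R : DRule α) (I : Interp α) : V4 :=
  evalOD (R.headList.map (evalDisj I))

def DRule.bodyVal (R : DRule α) (I : Interp α) : V4 :=
  min (evalConj I R.pos) (evalNegs I R.neg)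

def dRuleSat (I : Interp α) (R : DRule α) : Prop := R.bodyVal I ≤ R.headVal I

def isDModel (I : Interp α) (P : Set (DRule α)) : Prop := ∀ R ∈ P, dRuleSat I R

/-- A disjunctive reduct rule `𝒞 ← [F*,] A1,…,Am`. -/
structure DRedRule (α : Type) where
  head : List (Lit α)
  pos : List (Lit α)
  fstar : Bool

def DRedRule.bodyVal (r : DRedRule α) (I : Interp α) : V4 :=
  min (if r.fstar then V4.Fs else V4.T) (evalConj I r.pos)

def dredSat (I : Interp α) (r : DRedRule α) : Prop := r.bodyVal I ≤ evalDisj I r.head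

def dredModel (I : Interp α) (Q : Set (DRedRule α)) : Prop := ∀ r ∈ Q, dredSat I r

def dxredHead (I : Interp α) (body : List (Lit α)) :
    List (List (Lit α)) → List (DRedRule α)
  | [] => []
  | [c] => [⟨c, body, false⟩]
  | c :: c' :: rest =>
    if evalDisj I c = V4.Fs then ⟨c, body, true⟩ :: dxredHead I body (c' :: rest)
    else [⟨c, body, false⟩]

/-- The ×-reduct of a DLPOD rule w.r.t. `I`. -/
def dxredRule (I : Interp α) (R : DRule α) : List (DRedRule α) :=
  if ∃ b ∈ R.neg, I b = V4.T then [] else dxredHead I R.pos R.headList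

/-- The ×-reduct of a DLPOD w.r.t. `I`. -/
def dxreduct (I : Interp α) (P : Set (DRule α)) : Set (DRedRule α) :=
  { r | ∃ R ∈ P, r ∈ dxredRule I R }

/-- `M` is an answer set of the DLPOD `P`: a consistent three-valued
interpretation that is a `≤`-minimal (three-valued) model of `P^M_×`. -/
def dAnswerSet (P : Set (DRule α)) (M : Interp α) : Prop :=
  solid M ∧ consistentI M ∧ dredModel M (dxreduct M P) ∧
  ∀ N : Interp α, solid N → dredModel N (dxreduct M P) → interpLE N M → N = M

/-- A positive disjunctive rule `C1 ∨ ⋯ ∨ Cq ← A1,…,Am`. -/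
structure DPosRule (α : Type) where
  head : List (Lit α)
  pos : List (Lit α)

/-- `N` is a two-valued model of a positive disjunctive program. -/
def dposModel (N : Set (Lit α)) (Q : Set (DPosRule α)) : Prop :=
  ∀ r ∈ Q, (∀ a ∈ r.pos, a ∈ N) → ∃ c ∈ r.head, c ∈ N

/-- The Gelfond–Lifschitz reduct of a disjunctive extended logic program (a
DLPOD all of whose rule heads are single disjunctions). -/
def glDReduct (P : Set (DRule α)) (N : Set (Lit α)) : Set (DPosRule α) :=
  { r | ∃ R ∈ P, (∀ b ∈ R.neg, b ∉ N) ∧ r.head = R.c1 ∧ r.pos = R.pos }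

/-- `N` is a standard disjunctive answer set: a consistent set of literals that
is a minimal two-valued model of `P^N`. -/
def stdDAnswerSet (P : Set (DRule α)) (N : Set (Lit α)) : Prop :=
  twoConsistent N ∧ dposModel N (glDReduct P N) ∧
  ∀ N', dposModel N' (glDReduct P N) → N' ⊆ N → N' = N

/-! ### Auxiliary lemmas for Statement 10 -/

lemma V4.F_le (x : V4) : V4.F ≤ x := by cases x <;> decide

lemma V4.le_T (x : V4) : x ≤ V4.T := by cases x <;> decide

lemma evalOD_cons (v : V4) (vs : List V4) :
    evalOD (v :: vs) = if v = V4.Fs then evalOD vs else v := by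
  by_cases h : v = V4.Fs <;> simp [evalOD, V4.times, h]

lemma evalConj_cons (I : Interp α) (a : Lit α) (t : List (Lit α)) :
    evalConj I (a :: t) = min (I a) (evalConj I t) := by
  simp [evalConj]

lemma evalConj_le_T (I : Interp α) (L : List (Lit α)) : evalConj I L ≤ V4.T := by
  exact V4.le_T _

lemma evalConj_mono {I J : Interp α} (h : ∀ l, I l ≤ J l) (L : List (Lit α)) :
    evalConj I L ≤ evalConj J L := by
  induction L with
  | nil => simp [evalConj]
  | cons a t ih =>
    rw [evalConj_cons, evalConj_cons]
    exact min_le_min (h a) ih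

lemma evalConj_ne_Ts {I : Interp α} (hI : ∀ l, I l ≠ V4.Ts) (L : List (Lit α)) :
    evalConj I L ≠ V4.Ts := by
  induction L with
  | nil => simp only [evalConj, List.map_nil, List.foldr_nil]; decide
  | cons a t ih =>
    rw [evalConj_cons]
    rcases min_choice (I a) (evalConj I t) with h | h <;> rw [h]
    · exact hI a
    · exact ih

lemma evalNegs_eq_T {I : Interp α} {L : List (Lit α)} (h : ∀ b ∈ L, I b ≤ V4.Fs) :
    evalNegs I L = V4.T := by
  induction L with
  | nil => simp [evalNegs]
  | cons a t ih =>
    have ha : V4.notv (I a) = V4.T := by simp [V4.notv, h a (by simp)]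
    have ht : evalNegs I t = V4.T := ih (fun b hb => h b (by simp [hb]))
    have : evalNegs I (a :: t) = min (V4.notv (I a)) (evalNegs I t) := by
      simp [evalNegs]
    rw [this, ha, ht]; exact min_self _

lemma evalNegs_le_mem {I : Interp α} {L : List (Lit α)} {b : Lit α} (hb : b ∈ L) :
    evalNegs I L ≤ V4.notv (I b) := by
  induction L with
  | nil => simp at hb
  | cons a t ih =>
    have : evalNegs I (a :: t) = min (V4.notv (I a)) (evalNegs I t) := by
      simp [evalNegs]
    rw [this]
    rcases List.mem_cons.mp hb with h | h
    · subst h; exact min_le_left _ _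
    · exact le_trans (min_le_right _ _) (ih h)

/-- Part 1 head lemma: if `M` satisfies all rules of the reduct generated from a
head list `hs`, then the body value is below the ordered disjunction value. -/
lemma head_lemma_M (M : Interp α) (pos : List (Lit α)) :
    ∀ hs : List (Lit α), hs ≠ [] →
      (∀ r ∈ xredHead M pos hs, redSat M r) →
      evalConj M pos ≤ evalOD (hs.map M) := by
  intro hs
  induction hs with
  | nil => intro h; exact absurd rfl h
  | cons c t ih =>
    intro _ hsat
    cases t with
    | nil =>
      have hr : redSat M ⟨c, pos, false⟩ := hsat _ (by simp [xredHead])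
      have : evalConj M pos ≤ M c := by
        simpa [redSat, RedRule.bodyVal, min_eq_right (evalConj_le_T M pos)] using hr
      simp only [List.map_cons, List.map_nil, evalOD_cons]
      split <;> simp_all [evalOD]
    | cons c' rest =>
      by_cases hc : M c = V4.Fs
      · have hrec : ∀ r ∈ xredHead M pos (c' :: rest), redSat M r := by
          intro r hr
          exact hsat r (by simp [xredHead, hc, hr])
        have := ih (by simp) hrec
        simp only [List.map_cons, evalOD_cons, hc, if_pos rfl]
        simpa [evalOD_cons] using this
      · have hr : redSat M ⟨c, pos, false⟩ := hsat _ (by simp [xredHead, hc])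
        have h1 : evalConj M pos ≤ M c := by
          simpa [redSat, RedRule.bodyVal, min_eq_right (evalConj_le_T M pos)] using hr
        simp only [List.map_cons, evalOD_cons, hc, if_neg hc]
        exact h1

lemma le_collapse {e : V4} (he : e ≠ V4.Ts) {v : V4} (hle : e ≤ v) :
    e ≤ (if v = V4.Ts then V4.Fs else v) := by
  by_cases h : v = V4.Ts
  · subst h; simp only [if_pos rfl]
    cases e <;> first | decide | (exact absurd rfl he) | (exact absurd hle (by decide))
  · simpa [h] using hle

/-- Part 3 head lemma: the collapsed interpretation `N'` satisfies the reduct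
rules generated from a head list, given that the body value is below the
ordered disjunction of the head under `N`. -/
lemma head_lemma_N (M N : Interp α) (pos : List (Lit α))
    (hprec : ∀ l, preceq (N l) (M l)) :
    ∀ hs : List (Lit α),
      evalConj (fun l => if N l = V4.Ts then V4.Fs else N l) pos ≤ evalOD (hs.map N) →
      ∀ r ∈ xredHead M pos hs,
        redSat (fun l => if N l = V4.Ts then V4.Fs else N l) r := by
  set N' : Interp α := fun l => if N l = V4.Ts then V4.Fs else N l with hN'
  have hN'ne : ∀ l, N' l ≠ V4.Ts := by
    intro l; simp only [hN']; split
    · decide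
    · assumption
  have hEne : evalConj N' pos ≠ V4.Ts := evalConj_ne_Ts hN'ne pos
  have hEleT : evalConj N' pos ≤ V4.T := evalConj_le_T N' pos
  intro hs
  induction hs with
  | nil => intro _ r hr; simp [xredHead] at hr
  | cons c t ih =>
    intro hle r hr
    cases t with
    | nil =>
      simp only [xredHead, List.mem_singleton] at hr
      subst hr
      have hle' : evalConj N' pos ≤ N c := by
        by_cases h : N c = V4.Fs
        · simpa [List.map_cons, evalOD_cons, h, evalOD, V4.times] using hle
        · simpa [List.map_cons, evalOD_cons, h] using hle
      have : evalConj N' pos ≤ N' c := le_collapse hEne hle'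
      simpa [redSat, RedRule.bodyVal, min_eq_right hEleT] using this
    | cons c' rest =>
      by_cases hc : M c = V4.Fs
      · rw [show xredHead M pos (c :: c' :: rest)
              = ⟨c, pos, true⟩ :: xredHead M pos (c' :: rest) from by
            simp [xredHead, hc], List.mem_cons] at hr
        -- N c is F or Fs
        have hNc : N c = V4.F ∨ N c = V4.Fs := by
          rcases hprec c with h | ⟨h, _⟩ | ⟨_, h⟩
          · right; rw [h, hc]
          · left; exact h
          · rw [hc] at h; exact absurd h (by decide)
        rcases hr with hr | hr
        · subst hr
          rcases hNc with h | h
          · have hE : evalConj N' pos ≤ V4.F := by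
              simpa [List.map_cons, evalOD_cons, h] using hle
            refine le_trans (le_trans (min_le_right _ _) hE) ?_
            exact V4.F_le _
          · have hN'c : N' c = V4.Fs := by simp [hN', h]
            calc min (if (true : Bool) = true then V4.Fs else V4.T) (evalConj N' pos)
                ≤ V4.Fs := by simp [min_le_left]
              _ = N' c := hN'c.symm
        · refine ih ?_ r hr
          rcases hNc with h | h
          · have hE : evalConj N' pos ≤ V4.F := by
              simpa [List.map_cons, evalOD_cons, h] using hle
            exact le_trans hE (V4.F_le _)
          · simpa [List.map_cons, evalOD_cons, h] using hle
      · rw [show xredHead M pos (c :: c' :: rest) = [⟨c, pos, false⟩] from by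
            simp [xredHead, hc], List.mem_singleton] at hr
        subst hr
        have hNc : N c ≠ V4.Fs := by
          intro h
          rcases hprec c with h' | ⟨h', _⟩ | ⟨h', _⟩ <;> rw [h] at h'
          · exact hc h'.symm
          · exact absurd h' (by decide)
          · exact absurd h' (by decide)
        have hle' : evalConj N' pos ≤ N c := by
          simpa [List.map_cons, evalOD_cons, hNc] using hle
        have : evalConj N' pos ≤ N' c := le_collapse hEne hle'
        simpa [redSat, RedRule.bodyVal, min_eq_right hEleT] using this

/-- Every three-valued answer set of an LPOD `P` is, as a
four-valued interpretation, a solid `⪯`-minimal four-valued model of `P`. -/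
theorem threeAnswerSet_implies_minimal_solid {α : Type} (P : Set (Rule α))
    (M : Interp α) (h : threeAnswerSet P M) :
    isModel M P ∧ solid M ∧
      ∀ N : Interp α, isModel N P → interpPreceq N M → N = M := by
  obtain ⟨hsolid, _hcons, hmod, hleast⟩ := h
  have hMle : ∀ l, M l ≠ V4.T → M l ≤ V4.Fs := by
    intro l hl
    have := hsolid l
    cases hml : M l <;> first | decide | (exact absurd hml hl) | (exact absurd hml this)
  refine ⟨?_, hsolid, ?_⟩
  · -- M is a four-valued model of P
    intro R hR
    by_cases hb : ∃ b ∈ R.neg, M b = V4.T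
    · obtain ⟨b, hbmem, hbT⟩ := hb
      have h1 : evalNegs M R.neg ≤ V4.notv (M b) := evalNegs_le_mem hbmem
      have h2 : V4.notv (M b) = V4.F := by rw [hbT]; decide
      unfold ruleSat Rule.bodyVal
      refine le_trans (le_trans (min_le_right _ _) (h2 ▸ h1)) (V4.F_le _)
    · push_neg at hb
      have hnegT : evalNegs M R.neg = V4.T :=
        evalNegs_eq_T (fun b hbm => hMle b (hb b hbm))
      have hsat : ∀ r ∈ xredHead M R.pos R.headList, redSat M r := by
        intro r hr
        apply hmod
        refine ⟨R, hR, ?_⟩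
        simp only [xredRule]
        rw [if_neg]
        · exact hr
        · push_neg; exact hb
      have hkey : evalConj M R.pos ≤ evalOD (R.headList.map M) :=
        head_lemma_M M R.pos R.headList (by simp [Rule.headList]) hsat
      unfold ruleSat Rule.bodyVal Rule.headVal
      rw [hnegT, min_eq_left (evalConj_le_T M R.pos)]
      exact hkey
  · -- minimality
    intro N hNmod hprec
    set N' : Interp α := fun l => if N l = V4.Ts then V4.Fs else N l with hN'
    have hN'solid : solid N' := by
      intro l; simp only [hN']; split
      · decide
      · assumption
    have hN'leN : ∀ l, N' l ≤ N l := by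
      intro l; simp only [hN']; split
      · rename_i h; rw [h]; decide
      · exact le_refl _
    -- N' is a model of the reduct
    have hN'mod : redModel N' (xreduct M P) := by
      rintro r ⟨R, hRP, hr⟩
      simp only [xredRule] at hr
      split at hr
      · simp at hr
      · rename_i hb
        push_neg at hb
        -- evalNegs N R.neg = T
        have hNnegs : evalNegs N R.neg = V4.T := by
          apply evalNegs_eq_T
          intro b hbm
          rcases hprec b with h | ⟨h, _⟩ | ⟨_, h⟩
          · rw [h]; exact hMle b (hb b hbm)
          · rw [h]; decide
          · exact absurd h (hb b hbm)
        have hNsat := hNmod R hRP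
        unfold ruleSat Rule.bodyVal Rule.headVal at hNsat
        rw [hNnegs, min_eq_left (evalConj_le_T N R.pos)] at hNsat
        have hle : evalConj N' R.pos ≤ evalOD (R.headList.map N) :=
          le_trans (evalConj_mono hN'leN R.pos) hNsat
        exact head_lemma_N M N R.pos hprec R.headList hle r hr
    have hMN' : interpLE M N' := hleast N' hN'solid hN'mod
    funext l
    have h1 := hprec l
    have h2 := hMN' l
    have h3 := hsolid l
    simp only [hN'] at h2
    rcases h1 with h | ⟨h, _⟩ | ⟨hN, hM⟩
    · exact h
    · -- N l = F, need M l = F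
      rw [h] at h2
      have hMF : M l ≤ V4.F := by
        simpa [show (V4.F = V4.Ts) = False from by simp] using h2
      rw [h]
      exact (le_antisymm hMF (V4.F_le _)).symm
    · -- N l = Ts, M l = T : contradiction with h2
      rw [hN, hM] at h2 ⊢
      simp only [if_pos rfl] at h2
      exact absurd h2 (by decide)
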